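/- Let G be an analytic retract of a domain D. If the Lempert function l_G of G fails to satisfy the triangle inequality (i.e., is not a distance), then the Lempert function l_D of D also fails to be a distance; in particular the Carathéodory pseudodistance c_D and l_D are not identically equal on D. -/

import Mathlib

open Set Metric

/-- The Poincaré distance on the unit disc:
`ρ(a,b) = artanh |(a-b)/(1 - ā b)| = ½ log((1+d)/(1-d))`. -/
noncomputable def poincareDist (a b : ℂ) : ℝ :=
  Real.log ((1 + ‖(a - b) / (1 - (starRingEnd ℂ) a * b)‖) /
    (1 - ‖(a - b) / (1 - (starRingEnd ℂ) a * b)‖)) / 2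

/-- The Lempert function of a domain `D ⊆ ℂ^n`. -/
noncomputable def lempert (n : ℕ) (D : Set (Fin n → ℂ)) (z w : Fin n → ℂ) : ℝ :=
  sInf {t : ℝ | ∃ f : ℂ → (Fin n → ℂ), DifferentiableOn ℂ f (ball (0 : ℂ) 1) ∧
    MapsTo f (ball (0 : ℂ) 1) D ∧ f 0 = z ∧
    ∃ lam ∈ ball (0 : ℂ) 1, f lam = w ∧ t = poincareDist 0 lam}

/-- The Kobayashi pseudodistance of `D`: the largest pseudodistance dominated by the
Lempert function, given by infima of sums of Lempert distances along finite chains. -/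
noncomputable def kobayashi (n : ℕ) (D : Set (Fin n → ℂ)) (z w : Fin n → ℂ) : ℝ :=
  sInf {t : ℝ | ∃ (N : ℕ) (c : ℕ → (Fin n → ℂ)), c 0 = z ∧ c N = w ∧
    (∀ i ≤ N, c i ∈ D) ∧ t = ∑ i ∈ Finset.range N, lempert n D (c i) (c (i + 1))}

/-- The Carathéodory pseudodistance of `D`. -/
noncomputable def caratheodory (n : ℕ) (D : Set (Fin n → ℂ)) (z w : Fin n → ℂ) : ℝ :=
  sSup {t : ℝ | ∃ f : (Fin n → ℂ) → ℂ, DifferentiableOn ℂ f D ∧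
    MapsTo f D (ball (0 : ℂ) 1) ∧ t = poincareDist (f z) (f w)}

/-- compatibility: the complex absolute value as an `AbsoluteValue`. -/
noncomputable def Complex.abs : AbsoluteValue ℂ ℝ :=
  IsAbsoluteValue.toAbsoluteValue (norm : ℂ → ℝ)

theorem Complex.norm_eq_abs (z : ℂ) : ‖z‖ = Complex.abs z := rfl

theorem Complex.abs_conj (z : ℂ) : Complex.abs ((starRingEnd ℂ) z) = Complex.abs z :=
  Complex.norm_conj z

theorem Complex.sq_abs (z : ℂ) : Complex.abs z ^ 2 = Complex.normSq z := Complex.sq_norm z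

theorem Complex.re_le_abs (z : ℂ) : z.re ≤ Complex.abs z := Complex.re_le_norm z

theorem Complex.abs_re_le_abs (z : ℂ) : |z.re| ≤ Complex.abs z := Complex.abs_re_le_norm z

theorem Complex.abs_ofNat (k : ℕ) [k.AtLeastTwo] :
    Complex.abs (OfNat.ofNat k : ℂ) = OfNat.ofNat k := by
  rw [← Complex.norm_eq_abs]; exact Complex.norm_ofNat k

theorem Complex.abs_le_abs_of_mapsTo_ball_self {f : ℂ → ℂ} {z : ℂ}
    (hd : DifferentiableOn ℂ f (ball (0:ℂ) 1)) (h_maps : MapsTo f (ball (0:ℂ) 1) (ball (0:ℂ) 1))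
    (h₀ : f 0 = 0) (hz : Complex.abs z < 1) : Complex.abs (f z) ≤ Complex.abs z := by
  have := Complex.norm_le_norm_of_mapsTo_ball hd (h_maps.mono_right ball_subset_closedBall) h₀ (z := z)
    (by simpa [Complex.norm_eq_abs] using hz)
  simpa [Complex.norm_eq_abs] using this

noncomputable def pd (a b : ℂ) : ℝ := Complex.abs ((a - b) / (1 - (starRingEnd ℂ) a * b))

noncomputable def rhoFun (d : ℝ) : ℝ := Real.log ((1 + d) / (1 - d)) / 2

lemma den_ne {a b : ℂ} (ha : Complex.abs a < 1) (hb : Complex.abs b < 1) :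
    (1 - (starRingEnd ℂ) a * b) ≠ 0 := by
  intro h
  have h1 : (starRingEnd ℂ) a * b = 1 := by linear_combination -h
  have := congrArg Complex.abs h1
  rw [map_mul, map_one, Complex.abs_conj] at this
  nlinarith [Complex.abs.nonneg a, Complex.abs.nonneg b]

lemma sq_abs_identity (a b : ℂ) :
    Complex.abs (1 - (starRingEnd ℂ) a * b) ^ 2 - Complex.abs (a - b) ^ 2
      = (1 - Complex.abs a ^ 2) * (1 - Complex.abs b ^ 2) := by
  rw [Complex.sq_abs, Complex.sq_abs, Complex.sq_abs, Complex.sq_abs]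
  simp [Complex.normSq_apply, Complex.mul_re, Complex.mul_im]
  ring

lemma abs_sub_lt {a b : ℂ} (ha : Complex.abs a < 1) (hb : Complex.abs b < 1) :
    Complex.abs (a - b) < Complex.abs (1 - (starRingEnd ℂ) a * b) := by
  have h := sq_abs_identity a b
  have h1 : 0 < (1 - Complex.abs a ^ 2) * (1 - Complex.abs b ^ 2) :=
    mul_pos (by nlinarith [Complex.abs.nonneg a]) (by nlinarith [Complex.abs.nonneg b])
  have h2 : Complex.abs (a - b) ^ 2 < Complex.abs (1 - (starRingEnd ℂ) a * b) ^ 2 := by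
    linarith
  exact lt_of_pow_lt_pow_left₀ 2 (Complex.abs.nonneg _) h2

lemma pd_lt_one {a b : ℂ} (ha : Complex.abs a < 1) (hb : Complex.abs b < 1) : pd a b < 1 := by
  rw [pd, map_div₀]
  have h := abs_sub_lt ha hb
  have hpos : 0 < Complex.abs (1 - (starRingEnd ℂ) a * b) :=
    Complex.abs.pos (den_ne ha hb)
  rw [div_lt_one hpos]
  exact h

lemma pd_nonneg (a b : ℂ) : 0 ≤ pd a b := Complex.abs.nonneg _

lemma pd_symm (a b : ℂ) : pd a b = pd b a := by
  rw [pd, pd, map_div₀, map_div₀]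
  congr 1
  · exact Complex.abs.map_sub a b
  · rw [← Complex.abs_conj]
    congr 1
    simp [mul_comm]

lemma abs_den_pos {a b : ℂ} (ha : Complex.abs a < 1) (hb : Complex.abs b < 1) :
    0 < Complex.abs (1 - (starRingEnd ℂ) a * b) := Complex.abs.pos (den_ne ha hb)

/-- center-0 pseudo-hyperbolic inequality -/
lemma pd_center_zero {a c : ℂ} (ha : Complex.abs a < 1) (hc : Complex.abs c < 1) :
    pd a c ≤ (Complex.abs a + Complex.abs c) / (1 + Complex.abs a * Complex.abs c) := by
  set x := Complex.abs a with hx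
  set y := Complex.abs c with hy
  have hx0 : 0 ≤ x := Complex.abs.nonneg a
  have hy0 : 0 ≤ y := Complex.abs.nonneg c
  set s : ℝ := (a * (starRingEnd ℂ) c).re with hs
  have hs_le : s ≤ x * y := by
    have := Complex.re_le_abs (a * (starRingEnd ℂ) c)
    rwa [map_mul, Complex.abs_conj] at this
  have hs_ge : -(x * y) ≤ s := by
    have := (abs_le.1 (Complex.abs_re_le_abs (a * (starRingEnd ℂ) c))).1
    rwa [map_mul, Complex.abs_conj] at this
  have e1 : Complex.abs (a - c) ^ 2 = x ^ 2 + y ^ 2 - 2 * s := by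
    rw [hx, hy, Complex.sq_abs, Complex.sq_abs, Complex.sq_abs]
    simp [Complex.normSq_apply, hs, Complex.mul_re]
    ring
  have e2 : Complex.abs (1 - (starRingEnd ℂ) a * c) ^ 2 = 1 - 2 * s + x ^ 2 * y ^ 2 := by
    rw [hx, hy, Complex.sq_abs, Complex.sq_abs, Complex.sq_abs]
    simp [Complex.normSq_apply, hs, Complex.mul_re, Complex.mul_im]
    ring
  have hd : 0 < Complex.abs (1 - (starRingEnd ℂ) a * c) := abs_den_pos ha hc
  have hd2 : 0 < 1 + x * y := by nlinarith
  rw [pd, map_div₀, div_le_div_iff₀ hd hd2]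
  have hsq : (Complex.abs (a - c) * (1 + x * y)) ^ 2 ≤ ((x + y) * Complex.abs (1 - (starRingEnd ℂ) a * c)) ^ 2 := by
    have key : ((x + y) * Complex.abs (1 - (starRingEnd ℂ) a * c)) ^ 2
        - (Complex.abs (a - c) * (1 + x * y)) ^ 2
        = 2 * (s + x * y) * (1 - x ^ 2) * (1 - y ^ 2) := by
      rw [mul_pow, mul_pow, e1, e2]; ring
    nlinarith [mul_nonneg (mul_nonneg (by linarith : (0:ℝ) ≤ 2 * (s + x * y))
      (by nlinarith : (0:ℝ) ≤ 1 - x ^ 2)) (by nlinarith : (0:ℝ) ≤ 1 - y ^ 2)]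
  have h1 : 0 ≤ Complex.abs (a - c) * (1 + x * y) :=
    mul_nonneg (Complex.abs.nonneg _) (by linarith)
  have h2 : 0 ≤ (x + y) * Complex.abs (1 - (starRingEnd ℂ) a * c) :=
    mul_nonneg (by linarith) (Complex.abs.nonneg _)
  nlinarith [hsq, h1, h2]

noncomputable def mob (b z : ℂ) : ℂ := (b - z) / (1 - (starRingEnd ℂ) b * z)

lemma abs_mob (b z : ℂ) : Complex.abs (mob b z) = pd b z := rfl

lemma mob_lt_one {b z : ℂ} (hb : Complex.abs b < 1) (hz : Complex.abs z < 1) :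
    Complex.abs (mob b z) < 1 := by rw [abs_mob]; exact pd_lt_one hb hz

lemma mob_zero (b : ℂ) : mob b 0 = b := by simp [mob]

lemma mob_self (b : ℂ) : mob b b = 0 := by simp [mob]

lemma mob_invol {b z : ℂ} (hb : Complex.abs b < 1) (hz : Complex.abs z < 1) :
    mob b (mob b z) = z := by
  have h1 : (1 - (starRingEnd ℂ) b * z) ≠ 0 := den_ne hb hz
  have h2 : (1 - (starRingEnd ℂ) b * b) ≠ 0 := den_ne hb hb
  unfold mob
  rw [div_eq_iff]
  · linear_combination (z - b) * (mul_inv_cancel₀ h1)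
  · intro h
    apply h2
    have expand : 1 - (starRingEnd ℂ) b * ((b - z) / (1 - (starRingEnd ℂ) b * z))
        = (1 - (starRingEnd ℂ) b * b) / (1 - (starRingEnd ℂ) b * z) := by
      field_simp
      ring
    rw [expand, div_eq_zero_iff] at h
    rcases h with h | h
    · linear_combination h
    · exact absurd h h1

lemma conj_den_ne {a b : ℂ} (ha : Complex.abs a < 1) (hb : Complex.abs b < 1) :
    (1 - a * (starRingEnd ℂ) b) ≠ 0 := by
  intro h
  apply den_ne ha hb
  have := congrArg (starRingEnd ℂ) h
  simpa [mul_comm] using this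

lemma pd_mob_invariant {a b c : ℂ} (ha : Complex.abs a < 1) (hb : Complex.abs b < 1)
    (hc : Complex.abs c < 1) : pd (mob b a) (mob b c) = pd a c := by
  have hba : (1 - (starRingEnd ℂ) b * a) ≠ 0 := den_ne hb ha
  have hbc : (1 - (starRingEnd ℂ) b * c) ≠ 0 := den_ne hb hc
  have hab : (1 - b * (starRingEnd ℂ) a) ≠ 0 := conj_den_ne hb ha
  have hbb : (1 - (starRingEnd ℂ) b * b) ≠ 0 := den_ne hb hb
  have hac : (1 - (starRingEnd ℂ) a * c) ≠ 0 := den_ne ha hc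
  have I1 : (mob b a - mob b c) * ((1 - (starRingEnd ℂ) b * a) * (1 - (starRingEnd ℂ) b * c))
      = (c - a) * (1 - (starRingEnd ℂ) b * b) := by
    unfold mob
    linear_combination (b - a) * (1 - (starRingEnd ℂ) b * c) * (mul_inv_cancel₀ hba)
      - (b - c) * (1 - (starRingEnd ℂ) b * a) * (mul_inv_cancel₀ hbc)
  have hcm : (starRingEnd ℂ) (mob b a)
      = ((starRingEnd ℂ) b - (starRingEnd ℂ) a) / (1 - b * (starRingEnd ℂ) a) := by
    simp [mob, map_div₀, map_sub, map_mul, Complex.conj_conj]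
  have I2 : (1 - (starRingEnd ℂ) (mob b a) * mob b c)
        * ((1 - b * (starRingEnd ℂ) a) * (1 - (starRingEnd ℂ) b * c))
      = (1 - (starRingEnd ℂ) a * c) * (1 - b * (starRingEnd ℂ) b) := by
    rw [hcm]; unfold mob
    linear_combination (-(((starRingEnd ℂ) b - (starRingEnd ℂ) a) * (b - c))
        * (1 - (starRingEnd ℂ) b * c) * (1 - (starRingEnd ℂ) b * c)⁻¹) * (mul_inv_cancel₀ hab)
      - (((starRingEnd ℂ) b - (starRingEnd ℂ) a) * (b - c)) * (mul_inv_cancel₀ hbc)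
  have e1 := congrArg Complex.abs I1
  have e2 := congrArg Complex.abs I2
  rw [map_mul, map_mul, map_mul] at e1 e2
  have habs : Complex.abs (1 - b * (starRingEnd ℂ) a) = Complex.abs (1 - (starRingEnd ℂ) b * a) := by
    rw [← Complex.abs_conj (1 - (starRingEnd ℂ) b * a)]
    congr 1
    simp [map_sub, map_mul, Complex.conj_conj]
  have hBc : Complex.abs (1 - b * (starRingEnd ℂ) b) = Complex.abs (1 - (starRingEnd ℂ) b * b) := by
    rw [mul_comm]
  rw [habs, hBc] at e2
  have hA1 : 0 < Complex.abs (1 - (starRingEnd ℂ) b * a) := Complex.abs.pos hba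
  have hA2 : 0 < Complex.abs (1 - (starRingEnd ℂ) b * c) := Complex.abs.pos hbc
  have hD : 0 < Complex.abs (1 - (starRingEnd ℂ) (mob b a) * mob b c) :=
    abs_den_pos (mob_lt_one hb ha) (mob_lt_one hb hc)
  have hAC : 0 < Complex.abs (1 - (starRingEnd ℂ) a * c) := Complex.abs.pos hac
  have key : Complex.abs (mob b a - mob b c) * Complex.abs (1 - (starRingEnd ℂ) a * c)
      = Complex.abs (c - a) * Complex.abs (1 - (starRingEnd ℂ) (mob b a) * mob b c) := by
    apply mul_right_cancel₀ (ne_of_gt (mul_pos hA1 hA2))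
    linear_combination (Complex.abs (1 - (starRingEnd ℂ) a * c)) * e1
      - (Complex.abs (c - a)) * e2
  rw [pd, pd, map_div₀, map_div₀, div_eq_div_iff hD.ne' hAC.ne']
  rw [Complex.abs.map_sub a c]
  linarith [key]

lemma pd_zero_right (b z : ℂ) : pd 0 z = Complex.abs z := by
  simp [pd]

lemma pd_triangle {a b c : ℂ} (ha : Complex.abs a < 1) (hb : Complex.abs b < 1)
    (hc : Complex.abs c < 1) :
    pd a c ≤ (pd a b + pd b c) / (1 + pd a b * pd b c) := by
  have h0 := pd_center_zero (a := mob b a) (c := mob b c) (mob_lt_one hb ha) (mob_lt_one hb hc)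
  rw [pd_mob_invariant ha hb hc, abs_mob, abs_mob, pd_symm b a] at h0
  exact h0

lemma rhoFun_nonneg {d : ℝ} (h0 : 0 ≤ d) (h1 : d < 1) : 0 ≤ rhoFun d := by
  have : (1:ℝ) ≤ (1 + d) / (1 - d) := by
    rw [le_div_iff₀ (by linarith)]; linarith
  have := Real.log_nonneg this
  unfold rhoFun; linarith

lemma rhoFun_mono {s t : ℝ} (hs : 0 ≤ s) (hst : s ≤ t) (ht : t < 1) :
    rhoFun s ≤ rhoFun t := by
  unfold rhoFun
  have h1 : (0:ℝ) < 1 - t := by linarith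
  have h2 : (0:ℝ) < 1 - s := by linarith
  have key : (1 + s) / (1 - s) ≤ (1 + t) / (1 - t) := by
    rw [div_le_div_iff₀ h2 h1]; nlinarith
  have := Real.log_le_log (by positivity) key
  linarith

lemma rhoFun_add {x y z : ℝ} (hx0 : 0 ≤ x) (hx1 : x < 1) (hy0 : 0 ≤ y) (hy1 : y < 1)
    (hz0 : 0 ≤ z) (hz1 : z < 1) (h : z ≤ (x + y) / (1 + x * y)) :
    rhoFun z ≤ rhoFun x + rhoFun y := by
  have hxy : (0:ℝ) < 1 + x * y := by nlinarith
  have hz : z * (1 + x * y) ≤ x + y := by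
    rw [← le_div_iff₀ hxy]; exact h
  have hx2 : (0:ℝ) < 1 - x := by linarith
  have hy2 : (0:ℝ) < 1 - y := by linarith
  have hz2 : (0:ℝ) < 1 - z := by linarith
  have hprod : (1 + z) / (1 - z) ≤ ((1 + x) / (1 - x)) * ((1 + y) / (1 - y)) := by
    rw [div_mul_div_comm, div_le_div_iff₀ hz2 (by positivity)]
    nlinarith
  have hlog := Real.log_le_log (by positivity) hprod
  rw [Real.log_mul (by positivity) (by positivity)] at hlog
  unfold rhoFun
  linarith

lemma poincareDist_eq (a b : ℂ) : poincareDist a b = rhoFun (pd a b) := rfl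

lemma poincareDist_self (a : ℂ) : poincareDist a a = 0 := by
  rw [poincareDist_eq]
  have : pd a a = 0 := by simp [pd]
  rw [this]
  simp [rhoFun]

lemma poincareDist_nonneg {a b : ℂ} (ha : Complex.abs a < 1) (hb : Complex.abs b < 1) :
    0 ≤ poincareDist a b := by
  rw [poincareDist_eq]
  exact rhoFun_nonneg (pd_nonneg a b) (pd_lt_one ha hb)

lemma poincareDist_symm (a b : ℂ) : poincareDist a b = poincareDist b a := by
  rw [poincareDist_eq, poincareDist_eq, pd_symm]

lemma poincareDist_triangle {a b c : ℂ} (ha : Complex.abs a < 1) (hb : Complex.abs b < 1)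
    (hc : Complex.abs c < 1) :
    poincareDist a c ≤ poincareDist a b + poincareDist b c := by
  rw [poincareDist_eq, poincareDist_eq, poincareDist_eq]
  exact rhoFun_add (pd_nonneg a b) (pd_lt_one ha hb) (pd_nonneg b c) (pd_lt_one hb hc)
    (pd_nonneg a c) (pd_lt_one ha hc) (pd_triangle ha hb hc)

lemma mob_differentiableOn {b : ℂ} (hb : Complex.abs b < 1) :
    DifferentiableOn ℂ (mob b) (ball (0:ℂ) 1) := by
  apply DifferentiableOn.div
  · exact (differentiableOn_const b).sub differentiableOn_id
  · exact (differentiableOn_const 1).sub (differentiableOn_id.const_mul _)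
  · intro z hz
    exact den_ne hb (by rwa [← Complex.norm_eq_abs, ← mem_ball_zero_iff])

lemma mob_mapsTo {b : ℂ} (hb : Complex.abs b < 1) :
    MapsTo (mob b) (ball (0:ℂ) 1) (ball (0:ℂ) 1) := by
  intro z hz
  rw [mem_ball_zero_iff] at hz ⊢
  rw [Complex.norm_eq_abs] at hz ⊢
  exact mob_lt_one hb hz

/-- Schwarz–Pick lemma. -/
lemma schwarz_pick {h : ℂ → ℂ} (hd : DifferentiableOn ℂ h (ball (0:ℂ) 1))
    (hm : MapsTo h (ball (0:ℂ) 1) (ball (0:ℂ) 1)) {x y : ℂ}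
    (hx : Complex.abs x < 1) (hy : Complex.abs y < 1) :
    poincareDist (h x) (h y) ≤ poincareDist x y := by
  have hxmem : x ∈ ball (0:ℂ) 1 := by rwa [mem_ball_zero_iff, Complex.norm_eq_abs]
  have hymem : y ∈ ball (0:ℂ) 1 := by rwa [mem_ball_zero_iff, Complex.norm_eq_abs]
  have hhx : Complex.abs (h x) < 1 := by
    have := hm hxmem; rwa [mem_ball_zero_iff, Complex.norm_eq_abs] at this
  have hhy : Complex.abs (h y) < 1 := by
    have := hm hymem; rwa [mem_ball_zero_iff, Complex.norm_eq_abs] at this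
  have h1 : DifferentiableOn ℂ (fun w => h (mob x w)) (ball (0:ℂ) 1) :=
    hd.comp (mob_differentiableOn hx) (mob_mapsTo hx)
  have hm1 : MapsTo (fun w => h (mob x w)) (ball (0:ℂ) 1) (ball (0:ℂ) 1) :=
    fun w hw => hm (mob_mapsTo hx hw)
  have hgd : DifferentiableOn ℂ (fun w => mob (h x) (h (mob x w))) (ball (0:ℂ) 1) :=
    (mob_differentiableOn hhx).comp h1 hm1
  have hgm : MapsTo (fun w => mob (h x) (h (mob x w))) (ball (0:ℂ) 1) (ball (0:ℂ) 1) :=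
    fun w hw => mob_mapsTo hhx (hm1 hw)
  have hg0 : (fun w => mob (h x) (h (mob x w))) 0 = 0 := by
    simp only [mob_zero]
    exact mob_self (h x)
  have hzlt : Complex.abs (mob x y) < 1 := mob_lt_one hx hy
  have hsch := Complex.abs_le_abs_of_mapsTo_ball_self hgd hgm hg0 hzlt
  rw [mob_invol hx hy] at hsch
  rw [abs_mob, abs_mob] at hsch
  rw [poincareDist_eq, poincareDist_eq]
  have h1' : pd (h x) (h y) ≤ pd x y := by
    exact hsch
  exact rhoFun_mono (pd_nonneg _ _) h1' (pd_lt_one hx hy)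

def caratSet (n : ℕ) (D : Set (Fin n → ℂ)) (z w : Fin n → ℂ) : Set ℝ :=
  {t : ℝ | ∃ f : (Fin n → ℂ) → ℂ, DifferentiableOn ℂ f D ∧
    MapsTo f D (ball (0 : ℂ) 1) ∧ t = poincareDist (f z) (f w)}

lemma zero_mem_caratSet (n : ℕ) (D : Set (Fin n → ℂ)) (z w : Fin n → ℂ) :
    (0:ℝ) ∈ caratSet n D z w := by
  refine ⟨fun _ => 0, differentiableOn_const _, fun x _ => mem_ball_self one_pos, ?_⟩
  rw [poincareDist_self]

/-- abs membership helper -/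
lemma abs_lt_one_of_mem {f : (Fin n → ℂ) → ℂ} {D : Set (Fin n → ℂ)}
    (hfm : MapsTo f D (ball (0:ℂ) 1)) {x : Fin n → ℂ} (hx : x ∈ D) :
    Complex.abs (f x) < 1 := by
  have := hfm hx
  rwa [mem_ball_zero_iff, Complex.norm_eq_abs] at this

/-- Local estimate: nearby points have uniformly bounded Carathéodory data. -/
lemma carat_local {n : ℕ} {D : Set (Fin n → ℂ)} {z1 z2 : Fin n → ℂ} {r : ℝ}
    (hr : 0 < r) (hball : ball z1 r ⊆ D) (h2 : dist z2 z1 < r / 2)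
    {f : (Fin n → ℂ) → ℂ} (hfd : DifferentiableOn ℂ f D)
    (hfm : MapsTo f D (ball (0:ℂ) 1)) :
    poincareDist (f z1) (f z2) ≤ poincareDist 0 (1/2 : ℂ) := by
  set φ : ℂ → (Fin n → ℂ) := fun lam => fun j => z1 j + 2 * (z2 j - z1 j) * lam with hφ
  have hφdiff : Differentiable ℂ φ := by
    rw [differentiable_pi]
    intro j
    exact (differentiable_const _).add ((differentiable_id.const_mul _))
  have hφmaps : MapsTo φ (ball (0:ℂ) 1) (ball z1 r) := by
    intro lam hlam
    rw [mem_ball_zero_iff] at hlam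
    rw [mem_ball, dist_pi_lt_iff hr]
    intro j
    rw [Complex.dist_eq]
    have : z1 j + 2 * (z2 j - z1 j) * lam - z1 j = 2 * (z2 j - z1 j) * lam := by ring
    rw [this]
    rw [Complex.norm_eq_abs, map_mul, map_mul]
    have hj : Complex.abs (z2 j - z1 j) ≤ dist z2 z1 := by
      rw [← Complex.norm_eq_abs, ← Complex.dist_eq]
      exact dist_le_pi_dist z2 z1 j
    have habs2 : Complex.abs 2 = 2 := by rw [← Complex.norm_eq_abs]; norm_num
    rw [habs2]
    have hd0 : 0 ≤ dist z2 z1 := dist_nonneg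
    calc 2 * Complex.abs (z2 j - z1 j) * Complex.abs lam
        ≤ 2 * dist z2 z1 * 1 := by
          apply mul_le_mul (by linarith) (le_of_lt hlam) (Complex.abs.nonneg _) (by linarith)
      _ < r := by linarith
  have hcomp : DifferentiableOn ℂ (fun lam => f (φ lam)) (ball (0:ℂ) 1) :=
    hfd.comp hφdiff.differentiableOn (fun lam hlam => hball (hφmaps hlam))
  have hcompm : MapsTo (fun lam => f (φ lam)) (ball (0:ℂ) 1) (ball (0:ℂ) 1) :=
    fun lam hlam => hfm (hball (hφmaps hlam))
  have h0 : Complex.abs (0:ℂ) < 1 := by simp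
  have hhalf : Complex.abs (1/2 : ℂ) < 1 := by
    rw [map_div₀]
    rw [map_one, ← Complex.norm_eq_abs]; norm_num
  have := schwarz_pick hcomp hcompm h0 hhalf
  have hφ0 : φ 0 = z1 := by funext j; simp [hφ]
  have hφhalf : φ (1/2) = z2 := by funext j; simp [hφ]; ring
  simp only [hφ0, hφhalf] at this
  exact this

lemma carat_bddAbove {n : ℕ} {D : Set (Fin n → ℂ)} (hDopen : IsOpen D)
    (hDconn : IsConnected D) {z w : Fin n → ℂ} (hz : z ∈ D) (hw : w ∈ D) :
    BddAbove (caratSet n D z w) := by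
  by_contra hcon
  set K : ℝ := poincareDist 0 (1/2 : ℂ) with hK
  set T : Set (Fin n → ℂ) := {v | v ∈ D ∧ BddAbove (caratSet n D z v)} with hT
  set U : Set (Fin n → ℂ) := {v | v ∈ D ∧ ¬ BddAbove (caratSet n D z v)} with hU
  have hTopen : IsOpen T := by
    rw [Metric.isOpen_iff]
    rintro v ⟨hvD, M, hM⟩
    obtain ⟨r, hr, hrD⟩ := Metric.isOpen_iff.mp hDopen v hvD
    refine ⟨r/2, by linarith, ?_⟩
    intro v' hv'
    have hv'D : v' ∈ D := hrD (ball_subset_ball (by linarith) hv')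
    refine ⟨hv'D, M + K, ?_⟩
    rintro t ⟨f, hfd, hfm, rfl⟩
    have htri := poincareDist_triangle (abs_lt_one_of_mem hfm hz)
      (abs_lt_one_of_mem hfm hvD) (abs_lt_one_of_mem hfm hv'D)
    have h1 : poincareDist (f z) (f v) ≤ M := hM ⟨f, hfd, hfm, rfl⟩
    have h2 : poincareDist (f v) (f v') ≤ K := by
      apply carat_local hr hrD _ hfd hfm
      rwa [mem_ball] at hv'
    linarith
  have hUopen : IsOpen U := by
    rw [Metric.isOpen_iff]
    rintro v ⟨hvD, hvnb⟩
    obtain ⟨r, hr, hrD⟩ := Metric.isOpen_iff.mp hDopen v hvD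
    refine ⟨r/2, by linarith, ?_⟩
    intro v' hv'
    have hv'D : v' ∈ D := hrD (ball_subset_ball (by linarith) hv')
    refine ⟨hv'D, fun hb => hvnb ?_⟩
    obtain ⟨M, hM⟩ := hb
    refine ⟨M + K, ?_⟩
    rintro t ⟨f, hfd, hfm, rfl⟩
    have htri := poincareDist_triangle (abs_lt_one_of_mem hfm hz)
      (abs_lt_one_of_mem hfm hv'D) (abs_lt_one_of_mem hfm hvD)
    have h1 : poincareDist (f z) (f v') ≤ M := hM ⟨f, hfd, hfm, rfl⟩
    have h2 : poincareDist (f v') (f v) ≤ K := by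
      rw [poincareDist_symm]
      apply carat_local hr hrD _ hfd hfm
      rwa [mem_ball] at hv'
    linarith
  have hsub : D ⊆ T ∪ U := by
    intro v hv
    by_cases hb : BddAbove (caratSet n D z v)
    · exact Or.inl ⟨hv, hb⟩
    · exact Or.inr ⟨hv, hb⟩
  have hzT : z ∈ T := by
    refine ⟨hz, 0, ?_⟩
    rintro t ⟨f, hfd, hfm, rfl⟩
    rw [poincareDist_self]
  have hwU : w ∈ U := ⟨hw, hcon⟩
  obtain ⟨x, hxD, hxT, hxU⟩ := hDconn.isPreconnected T U hTopen hUopen hsub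
    ⟨z, hz, hzT⟩ ⟨w, hw, hwU⟩
  exact hxU.2 hxT.2

lemma lempSet_nonneg {n : ℕ} {D : Set (Fin n → ℂ)} {z w : Fin n → ℂ} {t : ℝ}
    (ht : t ∈ {t : ℝ | ∃ f : ℂ → (Fin n → ℂ), DifferentiableOn ℂ f (ball (0 : ℂ) 1) ∧
      MapsTo f (ball (0 : ℂ) 1) D ∧ f 0 = z ∧
      ∃ lam ∈ ball (0 : ℂ) 1, f lam = w ∧ t = poincareDist 0 lam}) : 0 ≤ t := by
  obtain ⟨f, -, -, -, lam, hlam, -, rfl⟩ := ht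
  rw [mem_ball_zero_iff, Complex.norm_eq_abs] at hlam
  exact poincareDist_nonneg (by simp) hlam

lemma lempert_nonneg {n : ℕ} (D : Set (Fin n → ℂ)) (z w : Fin n → ℂ) :
    0 ≤ lempert n D z w :=
  Real.sInf_nonneg fun _ ht => lempSet_nonneg ht

lemma lempert_retract_eq {m n : ℕ} {G : Set (Fin m → ℂ)} {D : Set (Fin n → ℂ)}
    {θ : (Fin m → ℂ) → (Fin n → ℂ)} {ι : (Fin n → ℂ) → (Fin m → ℂ)}
    (hθ : DifferentiableOn ℂ θ G) (hθmaps : MapsTo θ G D)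
    (hι : DifferentiableOn ℂ ι D) (hιmaps : MapsTo ι D G)
    (hretract : ∀ x ∈ G, ι (θ x) = x) {a b : Fin m → ℂ} (ha : a ∈ G) (hb : b ∈ G) :
    lempert m G a b = lempert n D (θ a) (θ b) := by
  unfold lempert
  congr 1
  ext t
  constructor
  · rintro ⟨f, hfd, hfm, hf0, lam, hlam, hflam, rfl⟩
    exact ⟨θ ∘ f, hθ.comp hfd hfm, hθmaps.comp hfm, by simp [Function.comp, hf0],
      lam, hlam, by simp [Function.comp, hflam], rfl⟩
  · rintro ⟨f, hfd, hfm, hf0, lam, hlam, hflam, rfl⟩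
    refine ⟨ι ∘ f, hι.comp hfd hfm, hιmaps.comp hfm, ?_, lam, hlam, ?_, rfl⟩
    · simp only [Function.comp_apply, hf0]
      exact hretract a ha
    · simp only [Function.comp_apply, hflam]
      exact hretract b hb

/-- If `G` is an analytic retract of `D` and the Lempert function of `G` fails the triangle
inequality, then so does the Lempert function of `D`; in particular `c_D ≢ l_D`. -/
theorem lempert_not_distance_of_retract
    (m n : ℕ) (G : Set (Fin m → ℂ)) (D : Set (Fin n → ℂ))
    (hGopen : IsOpen G) (hGconn : IsConnected G)
    (hDopen : IsOpen D) (hDconn : IsConnected D)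
    (θ : (Fin m → ℂ) → (Fin n → ℂ)) (ι : (Fin n → ℂ) → (Fin m → ℂ))
    (hθ : DifferentiableOn ℂ θ G) (hθmaps : MapsTo θ G D)
    (hι : DifferentiableOn ℂ ι D) (hιmaps : MapsTo ι D G)
    (hretract : ∀ x ∈ G, ι (θ x) = x)
    (hG : ∃ a ∈ G, ∃ b ∈ G, ∃ c ∈ G,
      lempert m G a b + lempert m G b c < lempert m G a c) :
    (∃ a ∈ D, ∃ b ∈ D, ∃ c ∈ D,
      lempert n D a b + lempert n D b c < lempert n D a c) ∧
    ¬ (∀ z ∈ D, ∀ w ∈ D, caratheodory n D z w = lempert n D z w) := by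
  obtain ⟨a, ha, b, hb, c, hc, hlt⟩ := hG
  have ha' : θ a ∈ D := hθmaps ha
  have hb' : θ b ∈ D := hθmaps hb
  have hc' : θ c ∈ D := hθmaps hc
  have eqab := lempert_retract_eq hθ hθmaps hι hιmaps hretract ha hb
  have eqbc := lempert_retract_eq hθ hθmaps hι hιmaps hretract hb hc
  have eqac := lempert_retract_eq hθ hθmaps hι hιmaps hretract ha hc
  have hlt' : lempert n D (θ a) (θ b) + lempert n D (θ b) (θ c)
      < lempert n D (θ a) (θ c) := by
    rw [← eqab, ← eqbc, ← eqac]; exact hlt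
  refine ⟨⟨θ a, ha', θ b, hb', θ c, hc', hlt'⟩, ?_⟩
  intro H
  have hrfl : ∀ z w : Fin n → ℂ, caratheodory n D z w = sSup (caratSet n D z w) :=
    fun z w => rfl
  have hne : (caratSet n D (θ a) (θ c)).Nonempty := ⟨0, zero_mem_caratSet n D _ _⟩
  have hlt2 : lempert n D (θ a) (θ b) + lempert n D (θ b) (θ c)
      < sSup (caratSet n D (θ a) (θ c)) := by
    rw [← hrfl, H _ ha' _ hc']; exact hlt'
  obtain ⟨t, htmem, htgt⟩ := exists_lt_of_lt_csSup hne hlt2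
  obtain ⟨f, hfd, hfm, rfl⟩ := htmem
  have h1 : poincareDist (f (θ a)) (f (θ b)) ≤ lempert n D (θ a) (θ b) := by
    have := le_csSup (carat_bddAbove hDopen hDconn ha' hb')
      (⟨f, hfd, hfm, rfl⟩ : poincareDist (f (θ a)) (f (θ b)) ∈ caratSet n D (θ a) (θ b))
    rwa [← hrfl, H _ ha' _ hb'] at this
  have h2 : poincareDist (f (θ b)) (f (θ c)) ≤ lempert n D (θ b) (θ c) := by
    have := le_csSup (carat_bddAbove hDopen hDconn hb' hc')
      (⟨f, hfd, hfm, rfl⟩ : poincareDist (f (θ b)) (f (θ c)) ∈ caratSet n D (θ b) (θ c))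
    rwa [← hrfl, H _ hb' _ hc']  at this
  have htri := poincareDist_triangle (abs_lt_one_of_mem hfm ha')
    (abs_lt_one_of_mem hfm hb') (abs_lt_one_of_mem hfm hc')
  linarith
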